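/- arXiv:1004.3336 — 2 statements merged into one kernel-verified Lean document; each statement's English description precedes it below -/
import Mathlib

section
/- Let E be a valuation (order function) ord_E on a ring A with values in the nonnegative reals, satisfying ord_E(uv) = ord_E(u) + ord_E(v) and ord_E(u+v) ≥ min(ord_E(u), ord_E(v)). Let a_1,...,a_r and b_1,...,b_r be ideals of A such that a_i + p_i = b_i + p_i for all i, where p_i = {u ∈ A : ord_E(u) > ord_E(a_i)} and ord_E(a_i) denotes the infimum of ord_E over a_i. Then for all positive integers ℓ_1,...,ℓ_r one has ∏_i b_i^{ℓ_i} + J = ∏_i a_i^{ℓ_i} + J, where J = {f ∈ A : ord_E(f) > Σ_i ℓ_i · ord_E(a_i)}. -/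
open scoped ENNReal

section Aux

variable {A : Type*} [CommRing A] (ord : A → ℝ≥0∞)

/-- The ideal generated by elements of order `> μ`. -/
def ordGt (μ : ℝ≥0∞) : Ideal A := Ideal.span {x : A | μ < ord x}

lemma mem_ordGt {μ : ℝ≥0∞} {x : A} (hx : μ < ord x) : x ∈ ordGt ord μ :=
  Ideal.subset_span hx

lemma ordGt_spec (hmul : ∀ u v : A, ord (u * v) = ord u + ord v)
    (hadd : ∀ u v : A, min (ord u) (ord v) ≤ ord (u + v))
    (h0 : ord 0 = ⊤) {μ : ℝ≥0∞} (hμ : μ ≠ ⊤) :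
    ∀ x ∈ ordGt ord μ, μ < ord x := by
  intro x hx
  refine Submodule.span_induction (fun y hy => hy) ?_ ?_ ?_ hx
  · rw [h0]; exact hμ.lt_top
  · intro u v _ _ hu hv
    exact lt_of_lt_of_le (lt_min hu hv) (hadd u v)
  · intro c y _ hy
    have : ord (c * y) = ord c + ord y := hmul c y
    simpa [smul_eq_mul, this] using lt_of_lt_of_le hy le_add_self

lemma mul_bounded (hmul : ∀ u v : A, ord (u * v) = ord u + ord v)
    (hadd : ∀ u v : A, min (ord u) (ord v) ≤ ord (u + v))
    {I K : Ideal A} {μ κ : ℝ≥0∞}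
    (hI : ∀ x ∈ I, μ ≤ ord x) (hK : ∀ x ∈ K, κ ≤ ord x) :
    ∀ x ∈ I * K, μ + κ ≤ ord x := by
  intro x hx
  refine Submodule.mul_induction_on hx (fun m hm n hn => ?_) (fun u v hu hv => ?_)
  · rw [hmul]; exact add_le_add (hI m hm) (hK n hn)
  · exact le_trans (le_min hu hv) (hadd u v)

lemma mul_gt (hmul : ∀ u v : A, ord (u * v) = ord u + ord v)
    (hadd : ∀ u v : A, min (ord u) (ord v) ≤ ord (u + v))
    {I K : Ideal A} {μ κ : ℝ≥0∞} (hμ : μ ≠ ⊤)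
    (hI : ∀ x ∈ I, μ ≤ ord x) (hK : ∀ x ∈ K, κ < ord x) :
    ∀ x ∈ I * K, μ + κ < ord x := by
  intro x hx
  refine Submodule.mul_induction_on hx (fun m hm n hn => ?_) (fun u v hu hv => ?_)
  · rw [hmul]
    calc μ + κ < μ + ord n := ENNReal.add_lt_add_left hμ (hK n hn)
    _ ≤ ord m + ord n := add_le_add_left (hI m hm) _
  · exact lt_of_lt_of_le (lt_min hu hv) (hadd u v)

lemma key_mul (hmul : ∀ u v : A, ord (u * v) = ord u + ord v)
    (hadd : ∀ u v : A, min (ord u) (ord v) ≤ ord (u + v))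
    (h0 : ord 0 = ⊤) {c d c' d' : Ideal A} {μ μ' : ℝ≥0∞} (hμ : μ ≠ ⊤) (hμ' : μ' ≠ ⊤)
    (hcd : c ≤ d + ordGt ord μ) (hcd' : c' ≤ d' + ordGt ord μ')
    (hd : ∀ x ∈ d, μ ≤ ord x) (hd' : ∀ x ∈ d', μ' ≤ ord x) :
    c * c' ≤ d * d' + ordGt ord (μ + μ') := by
  have hGμ : ∀ x ∈ ordGt ord μ, μ < ord x := ordGt_spec ord hmul hadd h0 hμ
  have hGμ' : ∀ x ∈ ordGt ord μ', μ' < ord x := ordGt_spec ord hmul hadd h0 hμ'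
  have h1 : d * ordGt ord μ' ≤ ordGt ord (μ + μ') := fun x hx =>
    mem_ordGt ord (mul_gt ord hmul hadd hμ hd hGμ' x hx)
  have h2 : ordGt ord μ * d' ≤ ordGt ord (μ + μ') := by
    rw [mul_comm]
    intro x hx
    exact mem_ordGt ord (by
      have := mul_gt ord hmul hadd hμ' hd' hGμ x hx
      rwa [add_comm] at this)
  have h3 : ordGt ord μ * ordGt ord μ' ≤ ordGt ord (μ + μ') := fun x hx =>
    mem_ordGt ord (mul_gt ord hmul hadd hμ (fun x hx => (hGμ x hx).le) hGμ' x hx)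
  calc c * c' ≤ (d + ordGt ord μ) * (d' + ordGt ord μ') := Ideal.mul_mono hcd hcd'
  _ = d * d' + (d * ordGt ord μ' + (ordGt ord μ * d' + ordGt ord μ * ordGt ord μ')) := by
      ring
  _ ≤ d * d' + ordGt ord (μ + μ') := by
      rw [Submodule.add_eq_sup, Submodule.add_eq_sup, Submodule.add_eq_sup,
        Submodule.add_eq_sup]
      exact sup_le_sup_left (sup_le h1 (sup_le h2 h3)) _

lemma pow_bounded (hmul : ∀ u v : A, ord (u * v) = ord u + ord v)
    (hadd : ∀ u v : A, min (ord u) (ord v) ≤ ord (u + v))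
    {d : Ideal A} {μ : ℝ≥0∞} (hd : ∀ x ∈ d, μ ≤ ord x) :
    ∀ n : ℕ, ∀ x ∈ d ^ n, (n : ℝ≥0∞) * μ ≤ ord x := by
  intro n
  induction n with
  | zero => simp
  | succ n ih =>
    intro x hx
    rw [pow_succ] at hx
    have : ((n : ℝ≥0∞) * μ) + μ ≤ ord x := mul_bounded ord hmul hadd ih hd x hx
    calc ((n + 1 : ℕ) : ℝ≥0∞) * μ = (n : ℝ≥0∞) * μ + μ := by push_cast; ring
    _ ≤ ord x := this

lemma pow_le (hmul : ∀ u v : A, ord (u * v) = ord u + ord v)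
    (hadd : ∀ u v : A, min (ord u) (ord v) ≤ ord (u + v))
    (h0 : ord 0 = ⊤) {c d : Ideal A} {μ : ℝ≥0∞} (hμ : μ ≠ ⊤)
    (hcd : c ≤ d + ordGt ord μ) (hd : ∀ x ∈ d, μ ≤ ord x) :
    ∀ n : ℕ, c ^ n ≤ d ^ n + ordGt ord ((n : ℝ≥0∞) * μ) := by
  intro n
  induction n with
  | zero =>
    simp only [pow_zero, Submodule.add_eq_sup]
    exact le_sup_left
  | succ n ih =>
    have hnμ : (n : ℝ≥0∞) * μ ≠ ⊤ := ENNReal.mul_ne_top (ENNReal.natCast_ne_top n) hμ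
    have step : c ^ n * c ≤ d ^ n * d + ordGt ord ((n : ℝ≥0∞) * μ + μ) :=
      key_mul ord hmul hadd h0 hnμ hμ ih hcd
        (pow_bounded ord hmul hadd hd n) hd
    have : ((n + 1 : ℕ) : ℝ≥0∞) * μ = (n : ℝ≥0∞) * μ + μ := by push_cast; ring
    rw [pow_succ, pow_succ, this]
    exact step

lemma prod_bounded (hmul : ∀ u v : A, ord (u * v) = ord u + ord v)
    (hadd : ∀ u v : A, min (ord u) (ord v) ≤ ord (u + v))
    {r : ℕ} {d : Fin r → Ideal A} {ν : Fin r → ℝ≥0∞} {ℓ : Fin r → ℕ}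
    (hd : ∀ i, ∀ x ∈ d i, ν i ≤ ord x) (s : Finset (Fin r)) :
    ∀ x ∈ ∏ i ∈ s, d i ^ ℓ i, (∑ i ∈ s, (ℓ i : ℝ≥0∞) * ν i) ≤ ord x := by
  induction s using Finset.induction_on with
  | empty => simp
  | @insert j s hj ih =>
    rw [Finset.prod_insert hj, Finset.sum_insert hj]
    intro x hx
    refine mul_bounded ord hmul hadd (fun y hy => ?_) ih x hx
    exact pow_bounded ord hmul hadd (hd j) (ℓ j) y hy

lemma prod_le (hmul : ∀ u v : A, ord (u * v) = ord u + ord v)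
    (hadd : ∀ u v : A, min (ord u) (ord v) ≤ ord (u + v))
    (h0 : ord 0 = ⊤) {r : ℕ} {c d : Fin r → Ideal A} {ν : Fin r → ℝ≥0∞} {ℓ : Fin r → ℕ}
    (hν : ∀ i, ν i ≠ ⊤)
    (hcd : ∀ i, c i ≤ d i + ordGt ord (ν i))
    (hd : ∀ i, ∀ x ∈ d i, ν i ≤ ord x) (s : Finset (Fin r)) :
    (∏ i ∈ s, c i ^ ℓ i) ≤ (∏ i ∈ s, d i ^ ℓ i) + ordGt ord (∑ i ∈ s, (ℓ i : ℝ≥0∞) * ν i) := by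
  induction s using Finset.induction_on with
  | empty =>
    simp only [Finset.prod_empty, Finset.sum_empty, Submodule.add_eq_sup]
    exact le_sup_left
  | @insert j s hj ih =>
    rw [Finset.prod_insert hj, Finset.prod_insert hj, Finset.sum_insert hj]
    have hℓν : (ℓ j : ℝ≥0∞) * ν j ≠ ⊤ := ENNReal.mul_ne_top (ENNReal.natCast_ne_top _) (hν j)
    have hsum : (∑ i ∈ s, (ℓ i : ℝ≥0∞) * ν i) ≠ ⊤ := by
      refine (ENNReal.sum_lt_top.mpr ?_).ne
      intro i _
      exact (ENNReal.mul_ne_top (ENNReal.natCast_ne_top _) (hν i)).lt_top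
    exact key_mul ord hmul hadd h0 hℓν hsum
      (pow_le ord hmul hadd h0 (hν j) (hcd j) (hd j) (ℓ j)) ih
      (pow_bounded ord hmul hadd (hd j) (ℓ j))
      (prod_bounded ord hmul hadd hd s)

end Aux

/-- congruence of products of ideals modulo the "higher order" ideal `J`,
given that each `a i` and `b i` agree modulo `p i = {u | ord u > ord(a i)}`. -/
theorem stmt_0 {A : Type*} [CommRing A] (ord : A → ℝ≥0∞)
    (hmul : ∀ u v : A, ord (u * v) = ord u + ord v)
    (hadd : ∀ u v : A, min (ord u) (ord v) ≤ ord (u + v))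
    (r : ℕ) (a b p : Fin r → Ideal A) (J : Ideal A) (ℓ : Fin r → ℕ) (hℓ : ∀ i, 1 ≤ ℓ i)
    (hp : ∀ i, (p i : Set A) = {u : A | sInf (ord '' ((a i : Set A))) < ord u})
    (hab : ∀ i, a i + p i = b i + p i)
    (hJ : (J : Set A) = {f : A | ∑ i, (ℓ i : ℝ≥0∞) * sInf (ord '' ((a i : Set A))) < ord f}) :
    (∏ i, b i ^ ℓ i) + J = (∏ i, a i ^ ℓ i) + J := by
  set ν : Fin r → ℝ≥0∞ := fun i => sInf (ord '' ((a i : Set A))) with hν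
  set St : ℝ≥0∞ := ∑ i, (ℓ i : ℝ≥0∞) * ν i with hSt
  -- 0 ∈ J gives St < ord 0
  have h0J : St < ord 0 := by
    have : (0 : A) ∈ (J : Set A) := J.zero_mem
    rw [hJ] at this
    exact this
  have hSfin : St ≠ ⊤ := h0J.ne_top
  -- ord 0 = ⊤
  have h0 : ord 0 = ⊤ := by
    rcases eq_or_ne (ord 0) ⊤ with h | h
    · exact h
    · exfalso
      have h00 : ord 0 = ord 0 + ord 0 := by
        have := hmul 0 0
        rwa [mul_zero] at this
      have : ord 0 = 0 := by
        nth_rewrite 1 [← add_zero (ord 0)] at h00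
        exact (ENNReal.add_right_inj h).mp h00.symm
      rw [this] at h0J
      exact (not_lt_of_ge zero_le) h0J
  -- each ν i is finite
  have hνfin : ∀ i, ν i ≠ ⊤ := by
    intro i
    refine ne_top_of_le_ne_top hSfin ?_
    calc ν i = 1 * ν i := (one_mul _).symm
    _ ≤ (ℓ i : ℝ≥0∞) * ν i := by
        apply mul_le_mul_left
        exact_mod_cast Nat.one_le_cast.mpr (hℓ i)
    _ ≤ St := by
        rw [hSt]
        exact Finset.single_le_sum (f := fun i => (ℓ i : ℝ≥0∞) * ν i)
          (fun i _ => zero_le) (Finset.mem_univ i)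
  -- a i is bounded below by ν i
  have ha_bdd : ∀ i, ∀ x ∈ a i, ν i ≤ ord x := by
    intro i x hx
    exact sInf_le ⟨x, hx, rfl⟩
  -- p i ≤ ordGt (ν i) and membership characterization
  have hp_mem : ∀ i, ∀ x ∈ p i, ν i < ord x := by
    intro i x hx
    have : x ∈ (p i : Set A) := hx
    rw [hp i] at this
    exact this
  have hp_le : ∀ i, p i ≤ ordGt ord (ν i) := fun i x hx => mem_ordGt ord (hp_mem i x hx)
  -- b i ≤ a i + p i and a i ≤ b i + p i
  have hb_le : ∀ i, b i ≤ a i + p i := by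
    intro i
    rw [hab i, Submodule.add_eq_sup]
    exact le_sup_left
  have ha_le : ∀ i, a i ≤ b i + p i := by
    intro i
    rw [← hab i, Submodule.add_eq_sup]
    exact le_sup_left
  -- b i is bounded below by ν i
  have hb_bdd : ∀ i, ∀ x ∈ b i, ν i ≤ ord x := by
    intro i x hx
    have hx' : x ∈ a i + p i := hb_le i hx
    rw [Submodule.add_eq_sup] at hx'
    obtain ⟨y, hy, z, hz, rfl⟩ := Submodule.mem_sup.mp hx'
    refine le_trans (le_min (ha_bdd i y hy) (hp_mem i z hz).le) (hadd y z)
  have hbaG : ∀ i, b i ≤ a i + ordGt ord (ν i) := by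
    intro i
    refine le_trans (hb_le i) ?_
    rw [Submodule.add_eq_sup, Submodule.add_eq_sup]
    exact sup_le_sup_left (hp_le i) _
  have habG : ∀ i, a i ≤ b i + ordGt ord (ν i) := by
    intro i
    refine le_trans (ha_le i) ?_
    rw [Submodule.add_eq_sup, Submodule.add_eq_sup]
    exact sup_le_sup_left (hp_le i) _
  -- J = ordGt St
  have hJ' : ordGt ord St = J := by
    rw [ordGt, ← hJ, Ideal.span_eq]
  have main1 : (∏ i, b i ^ ℓ i) ≤ (∏ i, a i ^ ℓ i) + J := by
    rw [← hJ']
    exact prod_le ord hmul hadd h0 hνfin hbaG ha_bdd Finset.univ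
  have main2 : (∏ i, a i ^ ℓ i) ≤ (∏ i, b i ^ ℓ i) + J := by
    rw [← hJ']
    exact prod_le ord hmul hadd h0 hνfin habG hb_bdd Finset.univ
  apply le_antisymm
  · rw [Submodule.add_eq_sup]
    refine sup_le (le_trans main1 le_rfl) ?_
    rw [Submodule.add_eq_sup]
    exact le_sup_right
  · rw [Submodule.add_eq_sup]
    refine sup_le (le_trans main2 le_rfl) ?_
    rw [Submodule.add_eq_sup]
    exact le_sup_right
end

section
/- Let R = k⟦x_1,...,x_n⟧ be a formal power series ring over a field k of characteristic zero, let A be an R-algebra admitting a module of special differentials Ω'_{A/k}, and let B = A/I be a quotient R-algebra. Then Ω'_{B/k} exists and there is an exact sequence of B-modules I/I² → Ω'_{A/k} ⊗_A B → Ω'_{B/k} → 0, where the first map sends f to d'_{A/k}(f) ⊗ 1 and the second sends d'_{A/k}(f) ⊗ 1 to d'_{B/k}(f). -/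
/-- Formal partial derivative of a multivariate power series. -/
noncomputable def pderivPS {k : Type} [Field k] {n : ℕ} (i : Fin n)
    (f : MvPowerSeries (Fin n) k) : MvPowerSeries (Fin n) k :=
  fun m => ((m i + 1 : ℕ) : k) * MvPowerSeries.coeff (m + Finsupp.single i 1) f

/-- A `k`-derivation on an algebra `A` over `R = k⟦x₁,…,xₙ⟧` is *special* if on `R` it
satisfies `D f = ∑ᵢ (∂f/∂xᵢ) • D xᵢ`. -/
def IsSpecial {k : Type} [Field k] {n : ℕ} {A : Type} [CommRing A]
    [Algebra k A] [Algebra (MvPowerSeries (Fin n) k) A]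
    [IsScalarTower k (MvPowerSeries (Fin n) k) A]
    {M : Type} [AddCommGroup M] [Module k M] [Module A M] [IsScalarTower k A M]
    (D : Derivation k A M) : Prop :=
  ∀ f : MvPowerSeries (Fin n) k,
    D (algebraMap (MvPowerSeries (Fin n) k) A f) =
      ∑ i : Fin n, algebraMap (MvPowerSeries (Fin n) k) A (pderivPS i f) •
        D (algebraMap (MvPowerSeries (Fin n) k) A (MvPowerSeries.X i))


/-- A module of special differentials: an `A`-module `Ω` together with a universal
special `k`-derivation `d : A → Ω`. -/
structure SpecialDiff (k : Type) [Field k] (n : ℕ) (A : Type) [CommRing A]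
    [Algebra k A] [Algebra (MvPowerSeries (Fin n) k) A]
    [IsScalarTower k (MvPowerSeries (Fin n) k) A] where
  Ω : Type
  [acg : AddCommGroup Ω]
  [modk : Module k Ω]
  [modA : Module A Ω]
  [tower : IsScalarTower k A Ω]
  d : Derivation k A Ω
  special : IsSpecial (n := n) d
  universal : ∀ (M : Type) [AddCommGroup M] [Module k M] [Module A M]
      [IsScalarTower k A M] (D : Derivation k A M), IsSpecial (n := n) D →
      ∃! φ : Ω →ₗ[A] M, ∀ a : A, φ (d a) = D a

attribute [instance] SpecialDiff.acg SpecialDiff.modk SpecialDiff.modA SpecialDiff.tower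

section Aux
open TensorProduct

variable {k : Type} [Field k] {n : ℕ} {A : Type} [CommRing A]
    [Algebra k A] [Algebra (MvPowerSeries (Fin n) k) A]
    [IsScalarTower k (MvPowerSeries (Fin n) k) A]
    (sdA : SpecialDiff k n A) (I : Ideal A)

lemma auxSmul (a : A) (t : (A ⧸ I) ⊗[A] sdA.Ω) :
    a • t = (Ideal.Quotient.mk I a) • t := by
  rw [← algebraMap_smul (A ⧸ I), Ideal.Quotient.algebraMap_eq]

/-- The `A`-linear map `I → B ⊗ Ω`, `x ↦ 1 ⊗ d x`. -/
noncomputable def lam0 : I →ₗ[A] ((A ⧸ I) ⊗[A] sdA.Ω) where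
  toFun x := (1 : A ⧸ I) ⊗ₜ sdA.d (x : A)
  map_add' x y := by
    push_cast
    rw [map_add, TensorProduct.tmul_add]
  map_smul' a x := by
    have hx : ((a • x : I) : A) = a * (x : A) := rfl
    show (1 : A ⧸ I) ⊗ₜ[A] sdA.d ((a • x : I) : A) = _
    rw [hx, Derivation.leibniz, TensorProduct.tmul_add, tmul_smul, tmul_smul,
      auxSmul sdA I (x : A), Ideal.Quotient.eq_zero_iff_mem.2 x.2, zero_smul, add_zero]
    rfl

lemma lam0_ker : (I • ⊤ : Submodule A I) ≤ LinearMap.ker (lam0 sdA I) := by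
  intro y hy
  refine Submodule.smul_induction_on hy (fun a ha x _ => ?_) (fun x y hx hy => ?_)
  · rw [LinearMap.mem_ker, map_smul, auxSmul, Ideal.Quotient.eq_zero_iff_mem.2 ha, zero_smul]
  · rw [LinearMap.mem_ker, map_add] at *
    rw [hx, hy, add_zero]

/-- The map `I/I² → B ⊗ Ω`. -/
noncomputable def deltaMap : I.Cotangent →ₗ[A] ((A ⧸ I) ⊗[A] sdA.Ω) :=
  Submodule.liftQ _ (lam0 sdA I) (lam0_ker sdA I)

lemma deltaMap_apply (x : I) :
    deltaMap sdA I (I.toCotangent x) = (1 : A ⧸ I) ⊗ₜ sdA.d (x : A) := rfl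

/-- The submodule `N = {1 ⊗ d x : x ∈ I}` of `B ⊗ Ω`. -/
noncomputable def NB : Submodule (A ⧸ I) ((A ⧸ I) ⊗[A] sdA.Ω) where
  carrier := LinearMap.range (lam0 sdA I)
  add_mem' h1 h2 := add_mem h1 h2
  zero_mem' := zero_mem _
  smul_mem' b t ht := by
    obtain ⟨a, rfl⟩ := Ideal.Quotient.mk_surjective b
    rw [← auxSmul]
    exact Submodule.smul_mem _ a ht

end Aux
section Aux2
open TensorProduct

variable {k : Type} [Field k] {n : ℕ} {A : Type} [CommRing A]
    [Algebra k A] [Algebra (MvPowerSeries (Fin n) k) A]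
    [IsScalarTower k (MvPowerSeries (Fin n) k) A]
    (sdA : SpecialDiff k n A) (I : Ideal A)

/-- The candidate module of special differentials of `A ⧸ I`. -/
noncomputable def OmB : Type := ((A ⧸ I) ⊗[A] sdA.Ω) ⧸ NB sdA I

noncomputable instance : AddCommGroup (OmB sdA I) := by delta OmB; infer_instance
noncomputable instance : Module k (OmB sdA I) := by delta OmB; infer_instance
noncomputable instance : Module A (OmB sdA I) := by delta OmB; infer_instance
noncomputable instance : Module (A ⧸ I) (OmB sdA I) := by delta OmB; infer_instance
instance : IsScalarTower k (A ⧸ I) (OmB sdA I) := by delta OmB; infer_instance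
instance : IsScalarTower A (A ⧸ I) (OmB sdA I) := by delta OmB; infer_instance
instance : IsScalarTower k A (OmB sdA I) := by delta OmB; infer_instance

/-- projection -/
noncomputable def prB : ((A ⧸ I) ⊗[A] sdA.Ω) →ₗ[A ⧸ I] OmB sdA I := (NB sdA I).mkQ

lemma prB_surjective : Function.Surjective (prB sdA I) := Submodule.mkQ_surjective _

lemma prB_ker : LinearMap.ker (prB sdA I) = NB sdA I := Submodule.ker_mkQ _

/-- The underlying function of the derivation `B → Ω'_B`. -/
noncomputable def dB0 : (A ⧸ I) → OmB sdA I := fun b =>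
  Quotient.liftOn' b (fun a => prB sdA I ((1 : A ⧸ I) ⊗ₜ sdA.d a)) (by
    intro a a' h
    have h' : a - a' ∈ I := (Submodule.quotientRel_def _).mp h
    rw [← sub_eq_zero, ← map_sub, ← TensorProduct.tmul_sub, ← map_sub]
    exact (Submodule.Quotient.mk_eq_zero _).2 ⟨⟨a - a', h'⟩, rfl⟩)

lemma dB0_mk (a : A) : dB0 sdA I (Ideal.Quotient.mk I a) = prB sdA I ((1 : A ⧸ I) ⊗ₜ sdA.d a) := rfl

end Aux2
section Aux3
open TensorProduct

variable {k : Type} [Field k] {n : ℕ} {A : Type} [CommRing A]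
    [Algebra k A] [Algebra (MvPowerSeries (Fin n) k) A]
    [IsScalarTower k (MvPowerSeries (Fin n) k) A]
    (sdA : SpecialDiff k n A) (I : Ideal A)

example : IsScalarTower (MvPowerSeries (Fin n) k) A (A ⧸ I) := inferInstance
example : IsScalarTower k A (A ⧸ I) := inferInstance

lemma auxSmul' (a : A) (t : OmB sdA I) : a • t = (Ideal.Quotient.mk I a) • t := by
  rw [← algebraMap_smul (A ⧸ I), Ideal.Quotient.algebraMap_eq]

set_option maxHeartbeats 1000000 in
/-- The universal special derivation on `A ⧸ I`. -/
noncomputable def dBder : Derivation k (A ⧸ I) (OmB sdA I) where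
  toFun := dB0 sdA I
  map_add' x y := by
    obtain ⟨a, rfl⟩ := Ideal.Quotient.mk_surjective x
    obtain ⟨b, rfl⟩ := Ideal.Quotient.mk_surjective y
    rw [← map_add, dB0_mk, dB0_mk, dB0_mk, map_add, TensorProduct.tmul_add, map_add]
  map_smul' c x := by
    obtain ⟨a, rfl⟩ := Ideal.Quotient.mk_surjective x
    dsimp only [RingHom.id_apply]
    have h1 : c • (Ideal.Quotient.mk I a) = Ideal.Quotient.mk I (c • a) := by
      rw [Algebra.smul_def, IsScalarTower.algebraMap_apply k A (A ⧸ I),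
        Ideal.Quotient.algebraMap_eq, ← map_mul, ← Algebra.smul_def]
    rw [h1, dB0_mk, dB0_mk, Derivation.map_smul, ← algebraMap_smul A c (sdA.d a),
      TensorProduct.tmul_smul, LinearMap.map_smul_of_tower, algebraMap_smul]
  map_one_eq_zero' := by
    show dB0 sdA I (Ideal.Quotient.mk I 1) = 0
    rw [dB0_mk, Derivation.map_one_eq_zero, TensorProduct.tmul_zero, map_zero]
  leibniz' x y := by
    obtain ⟨a, rfl⟩ := Ideal.Quotient.mk_surjective x
    obtain ⟨b, rfl⟩ := Ideal.Quotient.mk_surjective y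
    have term : ∀ a' b' : A, prB sdA I ((1 : A ⧸ I) ⊗ₜ (a' • sdA.d b')) =
        Ideal.Quotient.mk I a' • prB sdA I ((1 : A ⧸ I) ⊗ₜ sdA.d b') := by
      intro a' b'
      rw [TensorProduct.tmul_smul, LinearMap.map_smul_of_tower, auxSmul' sdA I]
    show dB0 sdA I (Ideal.Quotient.mk I a * Ideal.Quotient.mk I b) = _
    rw [← map_mul, dB0_mk, Derivation.leibniz, TensorProduct.tmul_add, map_add, term, term]
    rfl

lemma dBder_mk (a : A) :
    dBder sdA I (Ideal.Quotient.mk I a) = prB sdA I ((1 : A ⧸ I) ⊗ₜ sdA.d a) := rfl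

lemma dBder_special : IsSpecial (n := n) (dBder sdA I) := by
  intro f
  have hmap : ∀ g : MvPowerSeries (Fin n) k,
      algebraMap (MvPowerSeries (Fin n) k) (A ⧸ I) g =
        Ideal.Quotient.mk I (algebraMap (MvPowerSeries (Fin n) k) A g) := fun g =>
    IsScalarTower.algebraMap_apply (MvPowerSeries (Fin n) k) A (A ⧸ I) g
  simp only [hmap, dBder_mk]
  rw [sdA.special f, TensorProduct.tmul_sum, map_sum]
  refine Finset.sum_congr rfl fun i _ => ?_
  rw [← auxSmul' sdA I, ← LinearMap.map_smul_of_tower, ← TensorProduct.tmul_smul]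

end Aux3
section Aux4
open TensorProduct

variable {k : Type} [Field k] {n : ℕ} {A : Type} [CommRing A]
    [Algebra k A] [Algebra (MvPowerSeries (Fin n) k) A]
    [IsScalarTower k (MvPowerSeries (Fin n) k) A]
    (sdA : SpecialDiff k n A) (I : Ideal A)

/-- The natural map `Ω → Ω'_B`, `ω ↦ [1 ⊗ ω]`, as an `A`-linear map. -/
noncomputable def jmap : sdA.Ω →ₗ[A] OmB sdA I where
  toFun ω := prB sdA I ((1 : A ⧸ I) ⊗ₜ ω)
  map_add' x y := by
    show prB sdA I ((1 : A ⧸ I) ⊗ₜ (x + y)) = _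
    rw [TensorProduct.tmul_add, map_add]
  map_smul' a ω := by
    show prB sdA I ((1 : A ⧸ I) ⊗ₜ (a • ω)) = _
    rw [TensorProduct.tmul_smul, LinearMap.map_smul_of_tower]
    rfl

set_option maxHeartbeats 1000000 in
/-- `Ω'_{B/k}` for `B = A ⧸ I`. -/
noncomputable def sdB : SpecialDiff k n (A ⧸ I) where
  Ω := OmB sdA I
  d := dBder sdA I
  special := dBder_special sdA I
  universal := by
    intro M _ _ _ _ D hD
    letI instA : Module A M := Module.compHom M (Ideal.Quotient.mk I : A →+* A ⧸ I)
    have hsmulA : ∀ (a : A) (m : M), a • m = Ideal.Quotient.mk I a • m := fun a m => rfl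
    haveI instkA : IsScalarTower k A M := ⟨fun c a m => by
      rw [hsmulA, hsmulA]
      have : Ideal.Quotient.mk I (c • a) = c • Ideal.Quotient.mk I a := by
        rw [Algebra.smul_def, map_mul, ← Ideal.Quotient.algebraMap_eq,
          ← IsScalarTower.algebraMap_apply k A (A ⧸ I), ← Algebra.smul_def]
      rw [this, smul_assoc]⟩
    haveI instABM : IsScalarTower A (A ⧸ I) M := ⟨fun a b m => by
      rw [hsmulA]
      obtain ⟨x, rfl⟩ := Ideal.Quotient.mk_surjective b
      have : a • Ideal.Quotient.mk I x = Ideal.Quotient.mk I a * Ideal.Quotient.mk I x := by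
        rw [Algebra.smul_def a (Ideal.Quotient.mk I x), Ideal.Quotient.algebraMap_eq]
      rw [this, mul_smul]⟩
    -- the induced special derivation on `A`
    set D' : Derivation k A M :=
      { toFun := fun a => D (Ideal.Quotient.mk I a)
        map_add' := fun a b => by
          show D (Ideal.Quotient.mk I (a + b)) = _
          rw [map_add, map_add]
        map_smul' := fun c a => by
          show D (Ideal.Quotient.mk I (c • a)) = _
          have : Ideal.Quotient.mk I (c • a) = c • Ideal.Quotient.mk I a := by
            rw [Algebra.smul_def, map_mul, ← Ideal.Quotient.algebraMap_eq,
              ← IsScalarTower.algebraMap_apply k A (A ⧸ I), ← Algebra.smul_def]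
          rw [this, Derivation.map_smul]
          rfl
        map_one_eq_zero' := by
          show D (Ideal.Quotient.mk I 1) = 0
          rw [map_one, Derivation.map_one_eq_zero]
        leibniz' := fun a b => by
          show D (Ideal.Quotient.mk I (a * b)) = _
          rw [map_mul, Derivation.leibniz, hsmulA a, hsmulA b]
          rfl } with hD'def
    have hmap : ∀ g : MvPowerSeries (Fin n) k,
        algebraMap (MvPowerSeries (Fin n) k) (A ⧸ I) g =
          Ideal.Quotient.mk I (algebraMap (MvPowerSeries (Fin n) k) A g) := fun g =>
      IsScalarTower.algebraMap_apply (MvPowerSeries (Fin n) k) A (A ⧸ I) g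
    have hD'spec : IsSpecial (n := n) D' := by
      intro f
      have hDf := hD f
      simp only [hmap] at hDf
      show D (Ideal.Quotient.mk I (algebraMap (MvPowerSeries (Fin n) k) A f)) = _
      rw [hDf]
      exact Finset.sum_congr rfl fun i _ => by rw [hsmulA]; rfl
    obtain ⟨φA, hφA, huniq⟩ := sdA.universal M D' hD'spec
    set φT : ((A ⧸ I) ⊗[A] sdA.Ω) →ₗ[A ⧸ I] M := φA.liftBaseChange (A ⧸ I) with hφT
    have hNB : NB sdA I ≤ LinearMap.ker φT := by
      rintro t ⟨x, rfl⟩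
      have : φT (lam0 sdA I x) = φA (sdA.d (x : A)) := by
        show φT ((1 : A ⧸ I) ⊗ₜ sdA.d (x : A)) = _
        rw [hφT, LinearMap.liftBaseChange_tmul, one_smul]
      rw [LinearMap.mem_ker, this, hφA, ]
      show D (Ideal.Quotient.mk I (x : A)) = 0
      rw [Ideal.Quotient.eq_zero_iff_mem.2 x.2, map_zero]
    set φ : OmB sdA I →ₗ[A ⧸ I] M := (NB sdA I).liftQ φT hNB with hφdef
    have hφd : ∀ b : A ⧸ I, φ (dBder sdA I b) = D b := by
      intro b
      obtain ⟨a, rfl⟩ := Ideal.Quotient.mk_surjective b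
      rw [dBder_mk]
      show φT ((1 : A ⧸ I) ⊗ₜ sdA.d a) = _
      rw [hφT, LinearMap.liftBaseChange_tmul, one_smul, hφA]
      rfl
    refine ⟨φ, hφd, ?_⟩
    intro ψ hψ
    -- both `ψ ∘ j` and `φ ∘ j` are `A`-linear and agree with `D'` on `d`
    have key : ∀ ω : sdA.Ω, ψ (jmap sdA I ω) = φ (jmap sdA I ω) := by
      have h1 : (LinearMap.restrictScalars A ψ) ∘ₗ jmap sdA I = φA := by
        refine huniq _ fun a => ?_
        show ψ (prB sdA I ((1 : A ⧸ I) ⊗ₜ sdA.d a)) = D' a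
        rw [← dBder_mk]; exact hψ _
      have h2 : (LinearMap.restrictScalars A φ) ∘ₗ jmap sdA I = φA := by
        refine huniq _ fun a => ?_
        show φ (prB sdA I ((1 : A ⧸ I) ⊗ₜ sdA.d a)) = D' a
        rw [← dBder_mk]; exact hφd _
      intro ω
      have := congrArg (fun g => g ω) (h1.trans h2.symm)
      exact this
    refine LinearMap.ext fun z => ?_
    obtain ⟨t, rfl⟩ := prB_surjective sdA I z
    induction t using TensorProduct.induction_on with
    | zero => rw [map_zero, map_zero, map_zero]
    | tmul b ω =>
        have : (b ⊗ₜ[A] ω : (A ⧸ I) ⊗[A] sdA.Ω) = b • ((1 : A ⧸ I) ⊗ₜ ω) := by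
          rw [TensorProduct.smul_tmul', smul_eq_mul, mul_one]
        rw [this, map_smul, map_smul, map_smul]
        exact congrArg (b • ·) (key ω)
    | add s t hs ht => rw [map_add, map_add, map_add, hs, ht]

end Aux4

open TensorProduct in
/-- if `Ω'_{A/k}` exists and `B = A/I`, then `Ω'_{B/k}` exists and there is
an exact sequence `I/I² → Ω'_{A/k} ⊗_A B → Ω'_{B/k} → 0` with the natural maps. -/
theorem stmt_5 (k : Type) [Field k] [CharZero k] (n : ℕ) (A : Type) [CommRing A]
    [Algebra k A] [Algebra (MvPowerSeries (Fin n) k) A]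
    [IsScalarTower k (MvPowerSeries (Fin n) k) A]
    (sdA : SpecialDiff k n A) (I : Ideal A) :
    ∃ sdB : SpecialDiff k n (A ⧸ I),
      ∃ (δ : I.Cotangent →ₗ[A] ((A ⧸ I) ⊗[A] sdA.Ω))
        (u : ((A ⧸ I) ⊗[A] sdA.Ω) →ₗ[A ⧸ I] sdB.Ω),
        (∀ x : I, δ (I.toCotangent x) = (1 : A ⧸ I) ⊗ₜ[A] sdA.d (x : A)) ∧
        (∀ a : A, u ((1 : A ⧸ I) ⊗ₜ[A] sdA.d a) = sdB.d (Ideal.Quotient.mk I a)) ∧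
        Function.Surjective u ∧
        (LinearMap.range δ : Set ((A ⧸ I) ⊗[A] sdA.Ω)) = (LinearMap.ker u : Set _) := by
  refine ⟨sdB sdA I, deltaMap sdA I, prB sdA I, fun x => deltaMap_apply sdA I x,
    fun a => (dBder_mk sdA I a).symm, prB_surjective sdA I, ?_⟩
  refine Set.ext fun t => ?_
  constructor
  · rintro ⟨c, rfl⟩
    obtain ⟨x, rfl⟩ := Ideal.toCotangent_surjective I c
    show prB sdA I (deltaMap sdA I (I.toCotangent x)) = 0
    rw [deltaMap_apply, ← LinearMap.mem_ker, prB_ker]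
    exact ⟨x, rfl⟩
  · intro ht
    have h1 : t ∈ NB sdA I := by
      rw [← prB_ker sdA I]
      exact ht
    obtain ⟨x, rfl⟩ := h1
    exact ⟨I.toCotangent x, rfl⟩
end
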